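/- The functions H_KdV5 and K_KdV5 are in involution with respect to the canonical Poisson bracket: {H_KdV5, K_KdV5}₀ = 0 at every point of ℝ⁴ with y ≠ 0. -/

import Mathlib

/-- Canonical Poisson bracket on ℝ⁴ with coordinates `(p_x, p_y, x, y)`. -/
noncomputable def pbracket (f g : ℝ → ℝ → ℝ → ℝ → ℝ) (px py x y : ℝ) : ℝ :=
    (deriv (fun t => f px py t y) x) * (deriv (fun t => g t py x y) px)
  - (deriv (fun t => f t py x y) px) * (deriv (fun t => g px py t y) x)
  + (deriv (fun t => f px py x t) y) * (deriv (fun t => g px t x y) py)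
  - (deriv (fun t => f px t x y) py) * (deriv (fun t => g px py x t) y)

/-- The KdV₅ Hamiltonian. -/
noncomputable def HKdV5 (a ω₁ ω₂ μ : ℝ) (px py x y : ℝ) : ℝ :=
  (1/2)*(px^2 + py^2) + (1/2)*(ω₁*x^2 + ω₂*y^2) + a*x*y^2 + 2*a*x^3 + μ/(2*y^2)

/-- The KdV₅ second integral. -/
noncomputable def KKdV5 (a ω₁ ω₂ μ : ℝ) (px py x y : ℝ) : ℝ :=
  4*a*y*px*py + (4*ω₂ - ω₁ - 4*a*x)*(py^2 + μ/y^2)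
    + a^2*y^4 + 4*a^2*x^2*y^2 + 4*a*ω₂*x*y^2 + ω₂*(4*ω₂ - ω₁)*y^2

/-- `{H_KdV5, K_KdV5}₀ = 0` at every point with `y ≠ 0`. -/
theorem HKdV5_KKdV5_involution (a ω₁ ω₂ μ : ℝ) (px py x y : ℝ) (hy : y ≠ 0) :
    pbracket (HKdV5 a ω₁ ω₂ μ) (KKdV5 a ω₁ ω₂ μ) px py x y = 0 := by
  have hy2 : (2:ℝ) * y ^ 2 ≠ 0 := by positivity
  have hy2' : y ^ 2 ≠ 0 := pow_ne_zero 2 hy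
  -- ∂H/∂x
  have hHx : HasDerivAt (fun t : ℝ =>
      (1/2)*(px^2 + py^2) + (1/2)*(ω₁*t^2 + ω₂*y^2) + a*t*y^2 + 2*a*t^3 + μ/(2*y^2))
      (ω₁*x + a*y^2 + 6*a*x^2) x := by
    have h := ((((((hasDerivAt_pow 2 x).const_mul ω₁).add_const (ω₂*y^2)).const_mul
      (1/2)).const_add ((1/2)*(px^2 + py^2))).add
      (((hasDerivAt_id' x).const_mul a).mul_const (y^2))).add
      ((hasDerivAt_pow 3 x).const_mul (2*a)) |>.add_const (μ/(2*y^2))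
    refine h.congr_deriv ?_
    push_cast; ring
  -- ∂H/∂px
  have hHpx : HasDerivAt (fun t : ℝ =>
      (1/2)*(t^2 + py^2) + (1/2)*(ω₁*x^2 + ω₂*y^2) + a*x*y^2 + 2*a*x^3 + μ/(2*y^2))
      px px := by
    have h := (((hasDerivAt_pow 2 px).add_const (py^2)).const_mul (1/2)).add_const
      ((1/2)*(ω₁*x^2 + ω₂*y^2)) |>.add_const (a*x*y^2) |>.add_const (2*a*x^3)
      |>.add_const (μ/(2*y^2))
    refine h.congr_deriv ?_
    push_cast; ring
  -- ∂H/∂y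
  have hHy : HasDerivAt (fun t : ℝ =>
      (1/2)*(px^2 + py^2) + (1/2)*(ω₁*x^2 + ω₂*t^2) + a*x*t^2 + 2*a*x^3 + μ/(2*t^2))
      (ω₂*y + 2*a*x*y - μ/y^3) y := by
    have h := (((((((hasDerivAt_pow 2 y).const_mul ω₂).const_add (ω₁*x^2)).const_mul
      (1/2)).const_add ((1/2)*(px^2 + py^2))).add
      ((hasDerivAt_pow 2 y).const_mul (a*x))).add_const (2*a*x^3)).add
      ((hasDerivAt_const y μ).div ((hasDerivAt_pow 2 y).const_mul 2) hy2)
    refine h.congr_deriv ?_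
    push_cast
    field_simp
    ring
  -- ∂H/∂py
  have hHpy : HasDerivAt (fun t : ℝ =>
      (1/2)*(px^2 + t^2) + (1/2)*(ω₁*x^2 + ω₂*y^2) + a*x*y^2 + 2*a*x^3 + μ/(2*y^2))
      py py := by
    have h := (((hasDerivAt_pow 2 py).const_add (px^2)).const_mul (1/2)).add_const
      ((1/2)*(ω₁*x^2 + ω₂*y^2)) |>.add_const (a*x*y^2) |>.add_const (2*a*x^3)
      |>.add_const (μ/(2*y^2))
    refine h.congr_deriv ?_
    push_cast; ring
  -- ∂K/∂px
  have hKpx : HasDerivAt (fun t : ℝ =>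
      4*a*y*t*py + (4*ω₂ - ω₁ - 4*a*x)*(py^2 + μ/y^2)
        + a^2*y^4 + 4*a^2*x^2*y^2 + 4*a*ω₂*x*y^2 + ω₂*(4*ω₂ - ω₁)*y^2)
      (4*a*y*py) px := by
    have h := ((hasDerivAt_id' px).const_mul (4*a*y)).mul_const py
      |>.add_const ((4*ω₂ - ω₁ - 4*a*x)*(py^2 + μ/y^2)) |>.add_const (a^2*y^4)
      |>.add_const (4*a^2*x^2*y^2) |>.add_const (4*a*ω₂*x*y^2)
      |>.add_const (ω₂*(4*ω₂ - ω₁)*y^2)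
    refine h.congr_deriv ?_
    ring
  -- ∂K/∂x
  have hKx : HasDerivAt (fun t : ℝ =>
      4*a*y*px*py + (4*ω₂ - ω₁ - 4*a*t)*(py^2 + μ/y^2)
        + a^2*y^4 + 4*a^2*t^2*y^2 + 4*a*ω₂*t*y^2 + ω₂*(4*ω₂ - ω₁)*y^2)
      (-(4*a)*(py^2 + μ/y^2) + 8*a^2*x*y^2 + 4*a*ω₂*y^2) x := by
    have h := (((((((hasDerivAt_id' x).const_mul (4*a)).const_sub
      (4*ω₂ - ω₁)).mul_const (py^2 + μ/y^2)).const_add (4*a*y*px*py)).add_const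
      (a^2*y^4)).add (((hasDerivAt_pow 2 x).const_mul (4*a^2)).mul_const (y^2))).add
      (((hasDerivAt_id' x).const_mul (4*a*ω₂)).mul_const (y^2))
      |>.add_const (ω₂*(4*ω₂ - ω₁)*y^2)
    refine h.congr_deriv ?_
    push_cast; ring
  -- ∂K/∂py
  have hKpy : HasDerivAt (fun t : ℝ =>
      4*a*y*px*t + (4*ω₂ - ω₁ - 4*a*x)*(t^2 + μ/y^2)
        + a^2*y^4 + 4*a^2*x^2*y^2 + 4*a*ω₂*x*y^2 + ω₂*(4*ω₂ - ω₁)*y^2)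
      (4*a*y*px + 2*(4*ω₂ - ω₁ - 4*a*x)*py) py := by
    have h := ((hasDerivAt_id' py).const_mul (4*a*y*px)).add
      (((hasDerivAt_pow 2 py).add_const (μ/y^2)).const_mul (4*ω₂ - ω₁ - 4*a*x))
      |>.add_const (a^2*y^4) |>.add_const (4*a^2*x^2*y^2)
      |>.add_const (4*a*ω₂*x*y^2) |>.add_const (ω₂*(4*ω₂ - ω₁)*y^2)
    refine h.congr_deriv ?_
    push_cast; ring
  -- ∂K/∂y
  have hKy : HasDerivAt (fun t : ℝ =>
      4*a*t*px*py + (4*ω₂ - ω₁ - 4*a*x)*(py^2 + μ/t^2)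
        + a^2*t^4 + 4*a^2*x^2*t^2 + 4*a*ω₂*x*t^2 + ω₂*(4*ω₂ - ω₁)*t^2)
      (4*a*px*py - 2*(4*ω₂ - ω₁ - 4*a*x)*μ/y^3 + 4*a^2*y^3 + 8*a^2*x^2*y
        + 8*a*ω₂*x*y + 2*ω₂*(4*ω₂ - ω₁)*y) y := by
    have h := (((((((hasDerivAt_id' y).const_mul (4*a)).mul_const px).mul_const py).add
      ((((hasDerivAt_const y μ).div (hasDerivAt_pow 2 y) hy2').const_add
        (py^2)).const_mul (4*ω₂ - ω₁ - 4*a*x))).add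
      ((hasDerivAt_pow 4 y).const_mul (a^2))).add
      ((hasDerivAt_pow 2 y).const_mul (4*a^2*x^2))).add
      ((hasDerivAt_pow 2 y).const_mul (4*a*ω₂*x))
      |>.add ((hasDerivAt_pow 2 y).const_mul (ω₂*(4*ω₂ - ω₁)))
    refine h.congr_deriv ?_
    push_cast
    field_simp
    ring
  simp only [pbracket, HKdV5, KKdV5]
  rw [hHx.deriv, hHpx.deriv, hHy.deriv, hHpy.deriv, hKpx.deriv, hKx.deriv,
    hKpy.deriv, hKy.deriv]
  field_simp
  ring
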